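/- arXiv:1807.10325 — 3 statements merged into one kernel-verified Lean document; each statement's English description precedes it below -/
import Mathlib

section
/- Define Q^u_d(y) = Σ_{k=0}^{d} C(d,k) · ∏_{i=0}^{k-1}(i+1-r)(i+r) · ∏_{i=k+1}^{d}(y+d+r-i)(y+u+r+i). Then for all natural numbers u ≥ 1 and d ≥ 1, one has (u+d)(y+u+r) · Q^u_d(y) = u(y+u+d+r) · Q^{u-1}_d(y) + d(y+r)(y+u+1)(y+u+2r) · Q^u_{d-1}(y+1), as an identity of polynomials in y and r. -/
open Finset

/-- The two-variable polynomial ring `ℚ[y, r]`: variable `0` is `y` and variable `1` is `r`. -/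
noncomputable abbrev R2 : Type := MvPolynomial (Fin 2) ℚ

noncomputable def r : R2 := MvPolynomial.X 1

/-- `Q u d y = Σ_{k=0}^{d} C(d,k) ∏_{i=0}^{k-1}(i+1-r)(i+r) ∏_{i=k+1}^{d}(y+d+r-i)(y+u+r+i)`,
as a function of the element `y` (so that substitutions like `y ↦ y+1` are meaningful). -/
noncomputable def Q (u d : ℕ) (y : R2) : R2 :=
  ∑ k ∈ Finset.range (d + 1),
    (d.choose k : R2) * (∏ i ∈ Finset.range k, (((i : R2) + 1 - r) * ((i : R2) + r))) *
      ∏ i ∈ Finset.Icc (k + 1) d,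
        ((y + (d : R2) + r - (i : R2)) * (y + (u : R2) + r + (i : R2)))

/-- `φ d y = ∏_{i=1}^{d} (y+i)(y+i-1+2r)`. -/
noncomputable def phi (d : ℕ) (y : R2) : R2 :=
  ∏ i ∈ Finset.Icc 1 d, ((y + (i : R2)) * (y + (i : R2) - 1 + 2 * r))

noncomputable def A (k : ℕ) : R2 :=
  ∏ i ∈ Finset.range k, (((i : R2) + 1 - r) * ((i : R2) + r))

noncomputable def B (u d : ℕ) (y : R2) (k : ℕ) : R2 :=
  ∏ i ∈ Finset.Icc (k + 1) d, ((y + (d : R2) + r - (i : R2)) * (y + (u : R2) + r + (i : R2)))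

lemma Q_eq (u d : ℕ) (y : R2) :
    Q u d y = ∑ k ∈ Finset.range (d + 1), (d.choose k : R2) * A k * B u d y k := rfl

lemma A_succ (k : ℕ) : A (k + 1) = A k * (((k : R2) + 1 - r) * ((k : R2) + r)) :=
  Finset.prod_range_succ _ _

lemma B_eq (u d : ℕ) (y : R2) (k : ℕ) :
    B u d y k = (∏ i ∈ Finset.Icc (k + 1) d, (y + (d : R2) + r - (i : R2))) *
      ∏ i ∈ Finset.Icc (k + 1) d, (y + (u : R2) + r + (i : R2)) :=
  Finset.prod_mul_distrib

lemma prod_Icc_shift (f : ℕ → R2) (a b : ℕ) :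
    ∏ i ∈ Finset.Icc (a + 1) (b + 1), f i = ∏ i ∈ Finset.Icc a b, f (i + 1) := by
  rw [show Finset.Icc (a+1) (b+1) = Finset.map (addRightEmbedding 1) (Finset.Icc a b) by
    rw [Finset.map_add_right_Icc], Finset.prod_map]
  rfl

lemma prod_Icc_bot (f : ℕ → R2) {a b : ℕ} (h : a ≤ b) :
    ∏ i ∈ Finset.Icc a b, f i = f a * ∏ i ∈ Finset.Icc (a + 1) b, f i := by
  rw [Finset.Icc_add_one_left_eq_Ioc, ← Finset.Ioc_insert_left h, Finset.prod_insert Finset.left_notMem_Ioc]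

lemma prod_tele (f : ℕ → R2) {a b : ℕ} (h : a ≤ b + 1) :
    f a * ∏ i ∈ Finset.Icc (a + 1) (b + 1), f i = f (b + 1) * ∏ i ∈ Finset.Icc a b, f i := by
  rw [← prod_Icc_bot f h, Finset.prod_Icc_succ_top h, mul_comm]

lemma lemI (v d k : ℕ) (hk : k ≤ d) (y : R2) :
    (y + (v : R2) + 1 + r + (d : R2)) * B v d y k
      = (y + (v : R2) + 1 + r + (k : R2)) * B (v + 1) d y k := by
  rw [B_eq, B_eq]
  set f : ℕ → R2 := fun i => y + (v : R2) + r + (i : R2) with hf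
  have h2 : ∏ i ∈ Finset.Icc (k + 1) d, (y + ((v + 1 : ℕ) : R2) + r + (i : R2))
      = ∏ i ∈ Finset.Icc (k + 1) d, f (i + 1) := by
    refine Finset.prod_congr rfl fun i _ => ?_
    simp only [hf]; push_cast; ring
  rw [h2]
  have key := prod_tele f (a := k + 1) (b := d) (by omega)
  rw [prod_Icc_shift f (k + 1) d] at key
  have hfk : f (k + 1) = y + (v : R2) + 1 + r + (k : R2) := by simp only [hf]; push_cast; ring
  have hfd : f (d + 1) = y + (v : R2) + 1 + r + (d : R2) := by simp only [hf]; push_cast; ring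
  rw [hfk, hfd] at key
  have h1 : ∏ i ∈ Finset.Icc (k + 1) d, (y + (d : R2) + r - (i : R2))
      = ∏ i ∈ Finset.Icc (k + 1) d, (y + (d : R2) + r - (i : R2)) := rfl
  linear_combination (∏ i ∈ Finset.Icc (k + 1) d, (y + (d : R2) + r - (i : R2))) * key.symm

lemma lemII (v e k : ℕ) (hk : k ≤ e) (y : R2) :
    (y + r) * (y + ((v + 1 : ℕ) : R2) + r + (k : R2) + 1) * B (v + 1) e (y + 1) k
      = B (v + 1) (e + 1) y k := by
  rw [B_eq, B_eq]
  set h : ℕ → R2 := fun i => y + ((e : R2) + 1) + r - (i : R2) with hh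
  set f : ℕ → R2 := fun i => y + ((v + 1 : ℕ) : R2) + r + (i : R2) with hf
  have e1 : ∏ i ∈ Finset.Icc (k + 1) e, (y + 1 + (e : R2) + r - (i : R2))
      = ∏ i ∈ Finset.Icc (k + 1) e, h i := by
    refine Finset.prod_congr rfl fun i _ => ?_; simp only [hh]; ring
  have e2 : ∏ i ∈ Finset.Icc (k + 1) e, (y + 1 + ((v + 1 : ℕ) : R2) + r + (i : R2))
      = ∏ i ∈ Finset.Icc (k + 1) e, f (i + 1) := by
    refine Finset.prod_congr rfl fun i _ => ?_; simp only [hf]; push_cast; ring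
  have e3 : ∏ i ∈ Finset.Icc (k + 1) (e + 1), (y + ((e + 1 : ℕ) : R2) + r - (i : R2))
      = ∏ i ∈ Finset.Icc (k + 1) (e + 1), h i := by
    refine Finset.prod_congr rfl fun i _ => ?_; simp only [hh]; push_cast; ring
  rw [e1, e2, e3]
  have key1 : ∏ i ∈ Finset.Icc (k + 1) (e + 1), h i
      = (∏ i ∈ Finset.Icc (k + 1) e, h i) * (y + r) := by
    rw [Finset.prod_Icc_succ_top (by omega) h]
    congr 1
    simp only [hh]; push_cast; ring
  have key2 : ∏ i ∈ Finset.Icc (k + 1) (e + 1), f i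
      = (y + ((v + 1 : ℕ) : R2) + r + (k : R2) + 1) * ∏ i ∈ Finset.Icc (k + 1) e, f (i + 1) := by
    rw [prod_Icc_bot f (by omega : k + 1 ≤ e + 1), ← prod_Icc_shift f (k + 1) e]
    congr 1
    simp only [hf]; push_cast; ring
  rw [key1, key2]
  ring

lemma lemIII (v e j : ℕ) (hj : j ≤ e) (y : R2) :
    (y + r) * B (v + 1) e (y + 1) j
      = (y + (e : R2) + r - (j : R2)) * B (v + 1) (e + 1) y (j + 1) := by
  rw [B_eq, B_eq]
  set h : ℕ → R2 := fun i => y + ((e : R2) + 1) + r - (i : R2) with hh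
  set f : ℕ → R2 := fun i => y + ((v + 1 : ℕ) : R2) + r + (i : R2) with hf
  have e1 : ∏ i ∈ Finset.Icc (j + 1) e, (y + 1 + (e : R2) + r - (i : R2))
      = ∏ i ∈ Finset.Icc (j + 1) e, h i := by
    refine Finset.prod_congr rfl fun i _ => ?_; simp only [hh]; ring
  have e2 : ∏ i ∈ Finset.Icc (j + 1) e, (y + 1 + ((v + 1 : ℕ) : R2) + r + (i : R2))
      = ∏ i ∈ Finset.Icc (j + 1 + 1) (e + 1), f i := by
    rw [prod_Icc_shift f (j + 1) e]
    refine Finset.prod_congr rfl fun i _ => ?_; simp only [hf]; push_cast; ring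
  have e3 : ∏ i ∈ Finset.Icc (j + 1 + 1) (e + 1), (y + ((e + 1 : ℕ) : R2) + r - (i : R2))
      = ∏ i ∈ Finset.Icc (j + 1 + 1) (e + 1), h i := by
    refine Finset.prod_congr rfl fun i _ => ?_; simp only [hh]; push_cast; ring
  rw [e1, e2, e3]
  have key := prod_tele h (a := j + 1) (b := e) (by omega)
  have h1 : h (j + 1) = y + (e : R2) + r - (j : R2) := by simp only [hh]; push_cast; ring
  have h2 : h (e + 1) = y + r := by simp only [hh]; push_cast; ring
  rw [h1, h2] at key
  linear_combination (∏ i ∈ Finset.Icc (j + 1 + 1) (e + 1), f i) * key.symm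

noncomputable def Pf (v e : ℕ) (y : R2) (k : ℕ) : R2 :=
  ((e : R2) + 1) * (e.choose k : R2) *
    ((y + (v : R2) + 1 + r - (k : R2)) * (y + (v : R2) + 1 + r + (k : R2) + 1)) *
    (y + r) * A k * B (v + 1) e (y + 1) k

noncomputable def Nf (v e : ℕ) (y : R2) (k : ℕ) : R2 :=
  if k = 0 then 0 else
    ((e : R2) + 1) * (e.choose (k - 1) : R2) * (y + r) * A k * B (v + 1) e (y + 1) (k - 1)

lemma split3 (v e k : ℕ) (y : R2) :
    ((e + 1 : ℕ) : R2) * (y + r) * (y + ((v + 1 : ℕ) : R2) + 1) * (y + ((v + 1 : ℕ) : R2) + 2 * r) *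
      ((e.choose k : R2) * A k * B (v + 1) e (y + 1) k)
    = Pf v e y k + Nf v e y (k + 1) := by
  have hNf : Nf v e y (k + 1)
      = ((e : R2) + 1) * (e.choose k : R2) * (y + r) * A (k + 1) * B (v + 1) e (y + 1) k := by
    simp [Nf]
  rw [hNf, A_succ k]
  simp only [Pf]
  push_cast
  ring

lemma perk (v e k : ℕ) (hk : k ≤ e + 1) (y : R2) :
    (((v + 1 : ℕ) : R2) + ((e + 1 : ℕ) : R2)) * (y + ((v + 1 : ℕ) : R2) + r) *
      (((e + 1).choose k : R2) * A k * B (v + 1) (e + 1) y k)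
    = ((v + 1 : ℕ) : R2) * (y + ((v + 1 : ℕ) : R2) + ((e + 1 : ℕ) : R2) + r) *
        (((e + 1).choose k : R2) * A k * B v (e + 1) y k)
      + (Pf v e y k + Nf v e y k) := by
  have keyI := lemI v (e + 1) k hk y
  obtain _ | j := k
  · -- k = 0
    have keyII := lemII v e 0 (Nat.zero_le e) y
    simp only [Pf, Nf, if_pos rfl, Nat.choose_zero_right, Nat.cast_one, Nat.cast_zero, add_zero]
    push_cast at keyI keyII ⊢
    linear_combination (-((v : R2) + 1) * A 0) * keyI
      - (((e : R2) + 1) * (y + (v : R2) + 1 + r) * A 0) * keyII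
  · -- k = j + 1
    have hj : j ≤ e := by omega
    have keyIII := lemIII v e j hj y
    have hNf : Nf v e y (j + 1)
        = ((e : R2) + 1) * (e.choose j : R2) * (y + r) * A (j + 1) * B (v + 1) e (y + 1) j := by
      simp [Nf]
    have hcn : ((e : R2) + 1) * (e.choose j : R2)
        = ((j : R2) + 1) * (((e + 1).choose (j + 1) : ℕ) : R2) := by
      have hnat := Nat.add_one_mul_choose_eq e j
      have := congrArg (fun n : ℕ => (n : R2)) hnat
      push_cast at this
      linear_combination this
    rw [hNf]
    by_cases hje : j + 1 ≤ e
    · have keyII := lemII v e (j + 1) hje y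
      have hch2 : ((e : R2) + 1) * (e.choose (j + 1) : R2)
          = (((e : R2) + 1) - ((j : R2) + 1)) * (((e + 1).choose (j + 1) : ℕ) : R2) := by
        have hnat : (e + 1) * e.choose (j + 1) = (e + 1 - (j + 1)) * (e + 1).choose (j + 1) := by
          rw [Nat.add_one_mul_choose_eq, Nat.choose_succ_right_eq]; ring
        have := congrArg (fun n : ℕ => (n : R2)) hnat
        push_cast [Nat.cast_sub hj] at this
        linear_combination this
      simp only [Pf]
      push_cast at keyI keyII keyIII hch2 hcn ⊢
      linear_combination
        (-((v : R2) + 1) * (((e + 1).choose (j + 1) : ℕ) : R2) * A (j + 1)) * keyI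
        - (((e : R2) + 1) * (e.choose (j + 1) : R2) * (y + (v : R2) + 1 + r - ((j : R2) + 1)) *
            A (j + 1)) * keyII
        - (((e : R2) + 1) * (e.choose j : R2) * A (j + 1)) * keyIII
        - ((y + (v : R2) + 1 + r - ((j : R2) + 1)) * A (j + 1) * B (v + 1) (e + 1) y (j + 1)) * hch2
        - ((y + (e : R2) + r - (j : R2)) * A (j + 1) * B (v + 1) (e + 1) y (j + 1)) * hcn
    · -- j = e, k = e + 1
      have hj' : j = e := by omega
      subst hj'
      have hPf : Pf v j y (j + 1) = 0 := by
        simp [Pf, Nat.choose_succ_self]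
      rw [hPf]
      push_cast at keyI keyIII hcn ⊢
      linear_combination
        (-((v : R2) + 1) * (((j + 1).choose (j + 1) : ℕ) : R2) * A (j + 1)) * keyI
        - (((j : R2) + 1) * (j.choose j : R2) * A (j + 1)) * keyIII
        - ((y + (j : R2) + r - (j : R2)) * A (j + 1) * B (v + 1) (j + 1) y (j + 1)) * hcn


theorem stmt6 (u d : ℕ) (hu : 1 ≤ u) (hd : 1 ≤ d) :
    ((u : R2) + (d : R2)) * (MvPolynomial.X 0 + (u : R2) + r) * Q u d (MvPolynomial.X 0) =
      (u : R2) * (MvPolynomial.X 0 + (u : R2) + (d : R2) + r) * Q (u - 1) d (MvPolynomial.X 0) +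
        (d : R2) * (MvPolynomial.X 0 + r) * (MvPolynomial.X 0 + (u : R2) + 1) *
          (MvPolynomial.X 0 + (u : R2) + 2 * r) * Q u (d - 1) (MvPolynomial.X 0 + 1) := by
  obtain ⟨v, rfl⟩ : ∃ v, u = v + 1 := ⟨u - 1, (Nat.succ_pred_eq_of_pos hu).symm⟩
  obtain ⟨e, rfl⟩ : ∃ e, d = e + 1 := ⟨d - 1, (Nat.succ_pred_eq_of_pos hd).symm⟩
  simp only [Nat.add_sub_cancel]
  set y : R2 := MvPolynomial.X 0 with hy
  rw [Q_eq, Q_eq, Q_eq, Finset.mul_sum, Finset.mul_sum, Finset.mul_sum]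
  have h3 : ∑ k ∈ Finset.range (e + 1),
      ((e + 1 : ℕ) : R2) * (y + r) * (y + ((v + 1 : ℕ) : R2) + 1) *
        (y + ((v + 1 : ℕ) : R2) + 2 * r) * ((e.choose k : R2) * A k * B (v + 1) e (y + 1) k)
      = ∑ k ∈ Finset.range (e + 1 + 1), (Pf v e y k + Nf v e y k) := by
    rw [Finset.sum_add_distrib, Finset.sum_range_succ (Pf v e y), Finset.sum_range_succ' (Nf v e y)]
    have hp : Pf v e y (e + 1) = 0 := by simp [Pf, Nat.choose_succ_self]
    have hn : Nf v e y 0 = 0 := by simp [Nf]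
    rw [hp, hn, add_zero, add_zero, ← Finset.sum_add_distrib]
    exact Finset.sum_congr rfl fun k _ => split3 v e k y
  rw [h3, ← Finset.sum_add_distrib]
  exact Finset.sum_congr rfl fun k hk => perk v e k (Nat.lt_succ_iff.mp (Finset.mem_range.mp hk)) y
end

section
/- Define Q^u_d(y) = Σ_{k=0}^{d} C(d,k) · ∏_{i=0}^{k-1}(i+1-r)(i+r) · ∏_{i=k+1}^{d}(y+d+r-i)(y+u+r+i) and φ_d(y) = ∏_{i=1}^{d}(y+i)(y+i-1+2r). Then for all natural numbers u and d, Q^u_d(y) · φ_u(y) = Q^d_u(y) · φ_d(y), as polynomials in y and r. -/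
open Finset

lemma prodShift (a b : ℕ) (f : ℕ → R2) :
    ∏ i ∈ Icc (a+1) (b+1), f i = ∏ i ∈ Icc a b, f (i+1) := by
  rw [← Finset.map_add_right_Icc a b 1, Finset.prod_map]; rfl

lemma prodBot {a b : ℕ} (h : a ≤ b) (f : ℕ → R2) :
    ∏ i ∈ Icc a b, f i = f a * ∏ i ∈ Icc (a+1) b, f i := by
  rw [← Finset.Ico_add_one_right_eq_Icc, Finset.prod_eq_prod_Ico_succ_bot (by omega) f, Finset.Ico_add_one_right_eq_Icc]

/-- telescoping certificate for L4 -/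
noncomputable def TT (u d : ℕ) (y : R2) : ℕ → R2
  | 0 => 0
  | (k+1) => (u.choose k : R2) * (∏ i ∈ Finset.range (k+1), (((i:R2)+1-r)*((i:R2)+r))) *
      ∏ i ∈ Finset.Icc (k+1+1) (u+1), ((y + ((u+1:ℕ):R2) + r - (i:R2)) * (y + (d:R2) + r + (i:R2)))

lemma starL4 (u d k : ℕ) (hk : k ≤ u) (y : R2) :
    (y+(u:R2)+1) * (y+(u:R2)+2*r) * ∏ i ∈ Icc (k+1) u, ((y + (u:R2) + r - (i:R2)) * (y + ((d+1:ℕ):R2) + r + (i:R2)))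
      = (∏ i ∈ Icc (k+1) (u+1), ((y + ((u+1:ℕ):R2) + r - (i:R2)) * (y + (d:R2) + r + (i:R2))))
        + ((u:R2)-(d:R2)) * (y+r) * (∏ i ∈ Icc (k+1) u, ((y + 1 + (u:R2) + r - (i:R2)) * (y + 1 + (d:R2) + r + (i:R2))))
        + (((k:R2)+1-r) * ((k:R2)+r)) * ∏ i ∈ Icc (k+1+1) (u+1), ((y + ((u+1:ℕ):R2) + r - (i:R2)) * (y + (d:R2) + r + (i:R2))) := by
  rw [Finset.prod_mul_distrib, Finset.prod_mul_distrib, Finset.prod_mul_distrib, Finset.prod_mul_distrib]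
  have s1 : (∏ i ∈ Icc (k+1) (u+1), (y + ((u+1:ℕ):R2) + r - (i:R2)))
      = (y+(u:R2)+r-(k:R2)) * ∏ i ∈ Icc (k+1) u, (y + (u:R2) + r - (i:R2)) := by
    rw [prodShift k u, prodBot hk]
    congr 1
    · push_cast; ring
    · exact Finset.prod_congr rfl fun i _ => by push_cast; ring
  have s2 : (∏ i ∈ Icc (k+1) (u+1), (y + (d:R2) + r + (i:R2)))
      = (y+(d:R2)+r+(k:R2)+1) * ∏ i ∈ Icc (k+1) u, (y + ((d+1:ℕ):R2) + r + (i:R2)) := by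
    rw [prodBot (by omega : k+1 ≤ u+1), prodShift (k+1) u]
    congr 1
    · push_cast; ring
    · exact Finset.prod_congr rfl fun i _ => by push_cast; ring
  have s3 : (y+r) * ∏ i ∈ Icc (k+1) u, (y + 1 + (u:R2) + r - (i:R2))
      = (y+(u:R2)+r-(k:R2)) * ∏ i ∈ Icc (k+1) u, (y + (u:R2) + r - (i:R2)) := by
    have h2 : (∏ i ∈ Icc (k+1) (u+1), (y + ((u+1:ℕ):R2) + r - (i:R2)))
        = (∏ i ∈ Icc (k+1) u, (y + 1 + (u:R2) + r - (i:R2))) * (y+r) := by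
      rw [Finset.prod_Icc_succ_top (by omega : k+1 ≤ u+1)]
      congr 1
      · exact Finset.prod_congr rfl fun i _ => by push_cast; ring
      · push_cast; ring
    linear_combination s1 - h2
  have s4 : (∏ i ∈ Icc (k+1) u, (y + 1 + (d:R2) + r + (i:R2)))
      = ∏ i ∈ Icc (k+1) u, (y + ((d+1:ℕ):R2) + r + (i:R2)) :=
    Finset.prod_congr rfl fun i _ => by push_cast; ring
  have s5 : (∏ i ∈ Icc (k+1+1) (u+1), (y + ((u+1:ℕ):R2) + r - (i:R2)))
      = ∏ i ∈ Icc (k+1) u, (y + (u:R2) + r - (i:R2)) := by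
    rw [prodShift (k+1) u]
    exact Finset.prod_congr rfl fun i _ => by push_cast; ring
  have s6 : (∏ i ∈ Icc (k+1+1) (u+1), (y + (d:R2) + r + (i:R2)))
      = ∏ i ∈ Icc (k+1) u, (y + ((d+1:ℕ):R2) + r + (i:R2)) := by
    rw [prodShift (k+1) u]
    exact Finset.prod_congr rfl fun i _ => by push_cast; ring
  rw [s1, s2, s4, s5, s6]
  linear_combination -(((u:R2)-(d:R2)) * (∏ i ∈ Icc (k+1) u, (y + ((d+1:ℕ):R2) + r + (i:R2)))) * s3

set_option maxHeartbeats 2000000 in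
lemma L4 (u d : ℕ) (y : R2) :
    (y+(u:R2)+1) * (y+(u:R2)+2*r) * Q (d+1) u y
      = Q d (u+1) y + ((u:R2)-(d:R2)) * (y+r) * Q d u (y+1) := by
  unfold Q
  have key : ∀ k ∈ Finset.range (u+1+1),
      ((y+(u:R2)+1) * (y+(u:R2)+2*r) * ((u.choose k : R2) * (∏ i ∈ Finset.range k, (((i:R2)+1-r)*((i:R2)+r))) *
          ∏ i ∈ Finset.Icc (k+1) u, ((y + (u:R2) + r - (i:R2)) * (y + ((d+1:ℕ):R2) + r + (i:R2))))
        - ((u+1).choose k : R2) * (∏ i ∈ Finset.range k, (((i:R2)+1-r)*((i:R2)+r))) *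
          (∏ i ∈ Finset.Icc (k+1) (u+1), ((y + ((u+1:ℕ):R2) + r - (i:R2)) * (y + (d:R2) + r + (i:R2))))
        - ((u:R2)-(d:R2)) * (y+r) * ((u.choose k : R2) * (∏ i ∈ Finset.range k, (((i:R2)+1-r)*((i:R2)+r))) *
          ∏ i ∈ Finset.Icc (k+1) u, ((y + 1 + (u:R2) + r - (i:R2)) * (y + 1 + (d:R2) + r + (i:R2)))))
      = TT u d y (k+1) - TT u d y k := by
    intro k hk
    simp only [Finset.mem_range] at hk
    rcases k with _ | j
    · simp only [TT, Nat.choose_zero_right, Nat.cast_one, Finset.range_zero, Finset.prod_empty,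
        Nat.cast_ofNat, Nat.zero_add, zero_add, one_mul, mul_one, sub_zero, Finset.prod_range_one,
        Nat.cast_zero]
      have hst := starL4 u d 0 (Nat.zero_le u) y
      push_cast at hst ⊢
      linear_combination hst
    · have hP : (((u+1).choose (j+1) : ℕ) : R2) = (u.choose j : R2) + (u.choose (j+1) : R2) := by
        rw [Nat.choose_succ_succ]; push_cast; ring
      have hAP : (∏ i ∈ Finset.range (j+1+1), (((i:R2)+1-r)*((i:R2)+r)))
          = (∏ i ∈ Finset.range (j+1), (((i:R2)+1-r)*((i:R2)+r))) * ((((j+1:ℕ):R2)+1-r)*(((j+1:ℕ):R2)+r)) := by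
        rw [Finset.prod_range_succ]
      simp only [TT]
      rcases (by omega : j + 1 ≤ u ∨ j = u) with hju | hju
      · have hst := starL4 u d (j+1) hju y
        rw [hP, hAP]
        linear_combination ((u.choose (j+1) : R2) * (∏ i ∈ Finset.range (j+1), (((i:R2)+1-r)*((i:R2)+r)))) * hst
      · have h1 : ((u.choose (j+1) : ℕ) : R2) = 0 := by
          rw [Nat.choose_eq_zero_of_lt (by omega)]; simp
        have h2 : (((u+1).choose (j+1) : ℕ) : R2) = 1 := by
          rw [hju, Nat.choose_self]; simp
        have h6 : ((u.choose j : ℕ) : R2) = 1 := by rw [hju, Nat.choose_self]; simp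
        simp only [show Finset.Icc (j+1+1) u = ∅ from Finset.Icc_eq_empty (by omega),
          show Finset.Icc (j+1+1) (u+1) = ∅ from Finset.Icc_eq_empty (by omega),
          show Finset.Icc (j+1+1+1) (u+1) = ∅ from Finset.Icc_eq_empty (by omega),
          Finset.prod_empty, h1, h2, h6]
        ring
  have tel : ∑ k ∈ Finset.range (u+1+1),
      ((y+(u:R2)+1) * (y+(u:R2)+2*r) * ((u.choose k : R2) * (∏ i ∈ Finset.range k, (((i:R2)+1-r)*((i:R2)+r))) *
          ∏ i ∈ Finset.Icc (k+1) u, ((y + (u:R2) + r - (i:R2)) * (y + ((d+1:ℕ):R2) + r + (i:R2))))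
        - ((u+1).choose k : R2) * (∏ i ∈ Finset.range k, (((i:R2)+1-r)*((i:R2)+r))) *
          (∏ i ∈ Finset.Icc (k+1) (u+1), ((y + ((u+1:ℕ):R2) + r - (i:R2)) * (y + (d:R2) + r + (i:R2))))
        - ((u:R2)-(d:R2)) * (y+r) * ((u.choose k : R2) * (∏ i ∈ Finset.range k, (((i:R2)+1-r)*((i:R2)+r))) *
          ∏ i ∈ Finset.Icc (k+1) u, ((y + 1 + (u:R2) + r - (i:R2)) * (y + 1 + (d:R2) + r + (i:R2)))))
      = 0 := by
    rw [Finset.sum_congr rfl key, Finset.sum_range_sub (TT u d y)]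
    have h2 : TT u d y (u+1+1) = 0 := by
      simp [TT, Nat.choose_eq_zero_of_lt (Nat.lt_succ_self u)]
    rw [h2]
    simp [TT]
  rw [Finset.sum_sub_distrib, Finset.sum_sub_distrib] at tel
  have eA : ∑ k ∈ Finset.range (u+1+1),
      (y+(u:R2)+1) * (y+(u:R2)+2*r) * ((u.choose k : R2) * (∏ i ∈ Finset.range k, (((i:R2)+1-r)*((i:R2)+r))) *
          ∏ i ∈ Finset.Icc (k+1) u, ((y + (u:R2) + r - (i:R2)) * (y + ((d+1:ℕ):R2) + r + (i:R2))))
      = ∑ k ∈ Finset.range (u+1),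
      (y+(u:R2)+1) * (y+(u:R2)+2*r) * ((u.choose k : R2) * (∏ i ∈ Finset.range k, (((i:R2)+1-r)*((i:R2)+r))) *
          ∏ i ∈ Finset.Icc (k+1) u, ((y + (u:R2) + r - (i:R2)) * (y + ((d+1:ℕ):R2) + r + (i:R2)))) := by
    rw [Finset.sum_range_succ, Nat.choose_eq_zero_of_lt (Nat.lt_succ_self u)]
    simp
  have eC : ∑ k ∈ Finset.range (u+1+1),
      ((u:R2)-(d:R2)) * (y+r) * ((u.choose k : R2) * (∏ i ∈ Finset.range k, (((i:R2)+1-r)*((i:R2)+r))) *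
          ∏ i ∈ Finset.Icc (k+1) u, ((y + 1 + (u:R2) + r - (i:R2)) * (y + 1 + (d:R2) + r + (i:R2))))
      = ∑ k ∈ Finset.range (u+1),
      ((u:R2)-(d:R2)) * (y+r) * ((u.choose k : R2) * (∏ i ∈ Finset.range k, (((i:R2)+1-r)*((i:R2)+r))) *
          ∏ i ∈ Finset.Icc (k+1) u, ((y + 1 + (u:R2) + r - (i:R2)) * (y + 1 + (d:R2) + r + (i:R2)))) := by
    rw [Finset.sum_range_succ, Nat.choose_eq_zero_of_lt (Nat.lt_succ_self u)]
    simp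
  rw [Finset.mul_sum, Finset.mul_sum]
  linear_combination tel - eA + eC

lemma chooseCast (d k : ℕ) (h : k ≤ d) :
    ((d+1).choose k : R2) * ((d:R2) + 1 - (k:R2)) = ((d:R2)+1) * (d.choose k : R2) := by
  have h1 := Nat.choose_succ_right_eq (d+1) k
  have h2 := Nat.add_one_mul_choose_eq d k
  have hn : (d+1).choose k * (d+1-k) = (d+1) * d.choose k := h1.symm.trans h2.symm
  have := congrArg (Nat.cast : ℕ → R2) hn
  push_cast [Nat.cast_sub (by omega : k ≤ d + 1)] at this
  linear_combination this

lemma L2 (u d : ℕ) (y : R2) :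
    Q (u+1) (d+1) y = Q u (d+1) y + ((d:R2)+1) * (y + r) * Q u d (y+1) := by
  unfold Q
  rw [Finset.mul_sum]
  have hext : ∑ k ∈ Finset.range (d+1+1),
      ((d:R2) + 1) * (y + r) * ((d.choose k : R2) * (∏ i ∈ Finset.range k, (((i:R2)+1-r)*((i:R2)+r))) *
        ∏ i ∈ Finset.Icc (k+1) d, ((y + 1 + (d:R2) + r - (i:R2)) * (y + 1 + (u:R2) + r + (i:R2))))
      = ∑ k ∈ Finset.range (d+1),
      ((d:R2) + 1) * (y + r) * ((d.choose k : R2) * (∏ i ∈ Finset.range k, (((i:R2)+1-r)*((i:R2)+r))) *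
        ∏ i ∈ Finset.Icc (k+1) d, ((y + 1 + (d:R2) + r - (i:R2)) * (y + 1 + (u:R2) + r + (i:R2)))) := by
    rw [Finset.sum_range_succ, Nat.choose_eq_zero_of_lt (by omega)]
    simp
  rw [← hext, ← Finset.sum_add_distrib]
  refine Finset.sum_congr rfl fun k hk => ?_
  simp only [Finset.mem_range] at hk
  rcases (by omega : k ≤ d ∨ k = d+1) with hk1 | rfl
  · rw [Finset.prod_mul_distrib, Finset.prod_mul_distrib, Finset.prod_mul_distrib]
    have e1 : (∏ x ∈ Finset.Icc (k+1) (d+1), (y + ((d+1:ℕ):R2) + r - (x:R2)))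
        = (∏ x ∈ Finset.Icc (k+1) d, (y + ((d+1:ℕ):R2) + r - (x:R2))) * (y + r) := by
      rw [Finset.prod_Icc_succ_top (by omega : k+1 ≤ d+1)]
      congr 1
      push_cast; ring
    have e2 : (∏ x ∈ Finset.Icc (k+1) (d+1), (y + ((u+1:ℕ):R2) + r + (x:R2)))
        = (∏ x ∈ Finset.Icc (k+1+1) (d+1), (y + (u:R2) + r + (x:R2))) * (y + (u:R2) + r + (d:R2) + 2) := by
      rw [Finset.prod_Icc_succ_top (by omega : k+1 ≤ d+1), prodShift (k+1) d]
      congr 1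
      · exact Finset.prod_congr rfl fun i _ => by push_cast; ring
      · push_cast; ring
    have e3 : (∏ x ∈ Finset.Icc (k+1) (d+1), (y + (u:R2) + r + (x:R2)))
        = (y + (u:R2) + r + ((k:R2)+1)) * ∏ x ∈ Finset.Icc (k+1+1) (d+1), (y + (u:R2) + r + (x:R2)) := by
      rw [prodBot (by omega : k+1 ≤ d+1)]
      congr 1
      push_cast; ring
    have e4 : (∏ i ∈ Finset.Icc (k+1) d, ((y + 1 + (d:R2) + r - (i:R2)) * (y + 1 + (u:R2) + r + (i:R2))))
        = (∏ x ∈ Finset.Icc (k+1) d, (y + ((d+1:ℕ):R2) + r - (x:R2))) * ∏ x ∈ Finset.Icc (k+1+1) (d+1), (y + (u:R2) + r + (x:R2)) := by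
      rw [Finset.prod_mul_distrib, prodShift (k+1) d]
      congr 1
      · exact Finset.prod_congr rfl fun i _ => by push_cast; ring
      · exact Finset.prod_congr rfl fun i _ => by push_cast; ring
    rw [e1, e2, e3, e4]
    linear_combination ((∏ x ∈ Finset.range k, ((x:R2) + 1 - r)) * (∏ x ∈ Finset.range k, ((x:R2) + r)) *
      (∏ x ∈ Finset.Icc (k+1) d, (y + ((d+1:ℕ):R2) + r - (x:R2))) *
      (∏ x ∈ Finset.Icc (k+1+1) (d+1), (y + (u:R2) + r + (x:R2))) * (y + r)) * chooseCast d k hk1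
  · have h0 : (Nat.choose d (d+1) : R2) = 0 := by rw [Nat.choose_eq_zero_of_lt (by omega)]; simp
    simp only [show Finset.Icc (d+1+1) (d+1) = ∅ from Finset.Icc_eq_empty (by omega),
      show Finset.Icc (d+1+1) d = ∅ from Finset.Icc_eq_empty (by omega), Finset.prod_empty, h0]
    ring

lemma Q_d_zero (d : ℕ) (y : R2) : Q d 0 y = 1 := by simp [Q]

lemma phi_zero (y : R2) : phi 0 y = 1 := by simp [phi]

lemma phi_top (n : ℕ) (y : R2) : phi (n+1) y = phi n y * ((y + (n:R2) + 1) * (y + (n:R2) + 2*r)) := by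
  unfold phi
  rw [Finset.prod_Icc_succ_top (by omega)]
  congr 1
  push_cast
  ring

lemma phi_bot (n : ℕ) (y : R2) : phi (n+1) y = (y+1)*(y+2*r) * phi n (y+1) := by
  unfold phi
  rw [prodBot (by omega), prodShift 1 n]
  congr 1
  · push_cast; ring
  · exact Finset.prod_congr rfl fun i _ => by push_cast; ring

lemma L1 : ∀ (n : ℕ) (y : R2), Q 0 n y = phi n y := by
  have main : ∀ n : ℕ, (∀ y : R2, Q 0 n y = phi n y) ∧ (∀ y : R2, Q 0 (n+1) y = phi (n+1) y) := by
    intro n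
    induction n with
    | zero =>
      constructor
      · intro y; simp [Q, phi]
      · intro y
        unfold Q phi
        rw [Finset.sum_range_succ, Finset.sum_range_one]
        rw [show Finset.Icc 2 1 = (∅ : Finset ℕ) from Finset.Icc_eq_empty (by omega)]
        rw [Finset.Icc_self]
        simp only [Finset.prod_empty, Finset.prod_singleton, Finset.prod_range_one,
          Finset.prod_range_zero, Nat.choose_self, Nat.choose_zero_right, Nat.cast_one]
        push_cast
        ring
    | succ m ih =>
      refine ⟨ih.2, fun y => ?_⟩
      have hL4 := L4 (m+1) 0 y
      have hL2 := L2 0 m y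
      have i1 := ih.1 (y+1)
      have i2 := ih.2 y
      have i3 := ih.2 (y+1)
      have p1 := phi_top (m+1) y
      have p2 := phi_top m (y+1)
      push_cast at hL4 hL2 p1 p2 ⊢
      linear_combination -hL4 + ((y+(m:R2)+2)*(y+(m:R2)+1+2*r)) * hL2
        + ((y+(m:R2)+2)*(y+(m:R2)+1+2*r)) * i2
        + ((y+(m:R2)+2)*(y+(m:R2)+1+2*r)*(((m:R2)+1)*(y+r))) * i1
        - (((m:R2)+1)*(y+r)) * i3 - p1 - (((m:R2)+1)*(y+r)) * p2
  exact fun n => (main n).1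

lemma symmQ : ∀ (u : ℕ), ∀ (d : ℕ) (y : R2), Q u d y * phi u y = Q d u y * phi d y := by
  intro u
  induction u with
  | zero =>
    intro d y
    rw [Q_d_zero, phi_zero, L1]
    ring
  | succ n ihn =>
    intro d y
    cases d with
    | zero =>
      rw [Q_d_zero, phi_zero, L1]
      ring
    | succ m =>
      have h1 := L2 n m y
      have h2 := L2 m n y
      have h3 := L4 n m y
      have i1 := ihn (m+1) y
      have i2 := ihn m (y+1)
      have p1 := phi_top n y
      have p2 := phi_bot n y
      have p3 := phi_bot m y
      linear_combination (phi (n+1) y) * h1 + (Q n (m+1) y) * p1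
        + ((y+(n:R2)+1)*(y+(n:R2)+2*r)) * i1
        + (((m:R2)+1)*(y+r)*(Q n m (y+1))) * p2
        + (((m:R2)+1)*(y+r)*((y+1)*(y+2*r))) * i2
        - (((m:R2)+1)*(y+r)*(Q m n (y+1))) * p3
        - (phi (m+1) y) * h2 + (phi (m+1) y) * h3

theorem stmt10 (u d : ℕ) :
    Q u d (MvPolynomial.X 0) * phi u (MvPolynomial.X 0) =
      Q d u (MvPolynomial.X 0) * phi d (MvPolynomial.X 0) := by
  exact symmQ u d (MvPolynomial.X 0)
end

section
/- Define P^u_d(m) = Σ_{k=0}^{d-m} C(d-m,k) · ∏_{i=0}^{k-1}(m+i+1-r)(i+r) · ∏_{j=k+1}^{d-m}(d-m+r-j)(u+r+j). Then for all natural numbers u, d, m with 1 ≤ m ≤ min(u,d), one has (u+d)(u-m+r)·P^u_d(m) = (u-m)(u+d-m+r)·P^{u-1}_d(m) + d(u-m+2r)·P^u_{d-1}(m-1), as polynomials in r. -/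
open Polynomial Finset

/-- `P u d m = Σ_{k=0}^{d-m} C(d-m,k) · ∏_{i=0}^{k-1}(m+i+1-r)(i+r)
· ∏_{j=k+1}^{d-m}(d-m+r-j)(u+r+j)`, a polynomial in the indeterminate `r = X` over `ℚ`. -/
noncomputable def P (u d m : ℕ) : Polynomial ℚ :=
  ∑ k ∈ Finset.range (d - m + 1),
    ((d - m).choose k : ℚ[X]) *
      (∏ i ∈ Finset.range k, (((m : ℚ[X]) + (i : ℚ[X]) + 1 - X) * ((i : ℚ[X]) + X))) *
      ∏ j ∈ Finset.Icc (k + 1) (d - m),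
        ((((d - m : ℕ) : ℚ[X]) + X - (j : ℚ[X])) * ((u : ℚ[X]) + X + (j : ℚ[X])))

/-- `ψ k x = ∏_{i=1}^{k} (x+i)(i-1+2r)`. -/
noncomputable def psi (k : ℕ) (x : Polynomial ℚ) : Polynomial ℚ :=
  ∏ i ∈ Finset.Icc 1 k, ((x + (i : ℚ[X])) * ((i : ℚ[X]) - 1 + 2 * X))

/-- The generic summand. -/
noncomputable def Tm (n k : ℕ) (Up Mp : ℚ[X]) : ℚ[X] :=
  (n.choose k : ℚ[X]) *
    (∏ i ∈ Finset.range k, ((Mp + (i : ℚ[X]) + 1 - X) * ((i : ℚ[X]) + X))) *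
    ∏ j ∈ Finset.Icc (k + 1) n, (((n : ℚ[X]) + X - (j : ℚ[X])) * (Up + X + (j : ℚ[X])))

/-- Telescoping certificate. -/
noncomputable def cc (n k : ℕ) (Up Mp : ℚ[X]) : ℚ[X] :=
  (k : ℚ[X]) * (n.choose k : ℚ[X]) *
    (∏ i ∈ Finset.range (k - 1), (Mp + (i : ℚ[X]) + 1 - X)) *
    (∏ i ∈ Finset.range k, ((i : ℚ[X]) + X)) *
    (∏ i ∈ Finset.range (n + 1 - k), ((i : ℚ[X]) + X)) *
    (∏ j ∈ Finset.Icc k n, (Up + X + (j : ℚ[X])))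

lemma Icc_prod_bot {a b : ℕ} (h : a ≤ b) (f : ℕ → ℚ[X]) :
    ∏ j ∈ Icc a b, f j = f a * ∏ j ∈ Icc (a + 1) b, f j := by
  have e : Icc a b = insert a (Icc (a + 1) b) := by
    ext x; simp only [Finset.mem_Icc, Finset.mem_insert]; omega
  rw [e, Finset.prod_insert (by simp only [Finset.mem_Icc]; omega)]

lemma Qx_eq (n k : ℕ) :
    ∏ j ∈ Icc (k + 1) n, ((n : ℚ[X]) + X - (j : ℚ[X]))
      = ∏ i ∈ range (n - k), ((i : ℚ[X]) + X) := by
  refine Finset.prod_nbij' (fun j => n - j) (fun i => n - i) ?_ ?_ ?_ ?_ ?_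
  · intro a ha; rw [Finset.mem_Icc] at ha; rw [Finset.mem_range]; omega
  · intro a ha; rw [Finset.mem_range] at ha; rw [Finset.mem_Icc]; omega
  · intro a ha; rw [Finset.mem_Icc] at ha; omega
  · intro a ha; rw [Finset.mem_range] at ha; omega
  · intro a ha; rw [Finset.mem_Icc] at ha
    have e : ((n - a : ℕ) : ℚ[X]) = (n : ℚ[X]) - (a : ℚ[X]) := by
      push_cast [Nat.cast_sub ha.2]; ring
    rw [e]; ring

lemma Qu_shift (n k : ℕ) (Up : ℚ[X]) (hn : 1 ≤ n) :
    ∏ j ∈ Icc (k + 1) n, (Up - 1 + X + (j : ℚ[X]))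
      = ∏ j ∈ Icc k (n - 1), (Up + X + (j : ℚ[X])) := by
  refine Finset.prod_nbij' (fun j => j - 1) (fun i => i + 1) ?_ ?_ ?_ ?_ ?_
  · intro a ha; rw [Finset.mem_Icc] at ha ⊢; omega
  · intro a ha; rw [Finset.mem_Icc] at ha ⊢; omega
  · intro a ha; rw [Finset.mem_Icc] at ha; omega
  · intro a ha; omega
  · intro a ha; rw [Finset.mem_Icc] at ha
    have e : ((a - 1 : ℕ) : ℚ[X]) = (a : ℚ[X]) - 1 := by
      push_cast [Nat.cast_sub (show 1 ≤ a by omega)]; ring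
    rw [e]; ring

lemma perk_s19 (n k : ℕ) (hk : k ≤ n) (Up Mp : ℚ[X]) :
    (Up + (Mp + (n : ℚ[X]))) * (Up - Mp + X) * Tm n k Up Mp
      - (Up - Mp) * (Up + (n : ℚ[X]) + X) * Tm n k (Up - 1) Mp
      - (Mp + (n : ℚ[X])) * (Up - Mp + 2 * X) * Tm n k Up (Mp - 1)
    = cc n k Up Mp - cc n (k + 1) Up Mp := by
  rcases Nat.lt_or_ge k n with hlt | hge
  · obtain ⟨t, rfl⟩ : ∃ t, n = t + 1 := ⟨n - 1, by omega⟩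
    rcases Nat.eq_zero_or_pos k with rfl | hkpos
    · -- k = 0 < n
      have hT1 : Tm (t + 1) 0 Up Mp
          = (∏ i ∈ range (t + 1), ((i : ℚ[X]) + X)) *
            ((∏ j ∈ Icc 1 t, (Up + X + (j : ℚ[X]))) * (Up + X + ((t + 1 : ℕ) : ℚ[X]))) := by
        rw [Tm, Nat.choose_zero_right, Nat.cast_one, one_mul, Finset.prod_range_zero, one_mul,
          Finset.prod_mul_distrib, Qx_eq,
          Finset.prod_Icc_succ_top (show 0 + 1 ≤ t + 1 by omega)]
        norm_num
      have hT3 : Tm (t + 1) 0 Up (Mp - 1)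
          = (∏ i ∈ range (t + 1), ((i : ℚ[X]) + X)) *
            ((∏ j ∈ Icc 1 t, (Up + X + (j : ℚ[X]))) * (Up + X + ((t + 1 : ℕ) : ℚ[X]))) := by
        rw [Tm, Nat.choose_zero_right, Nat.cast_one, one_mul, Finset.prod_range_zero, one_mul,
          Finset.prod_mul_distrib, Qx_eq,
          Finset.prod_Icc_succ_top (show 0 + 1 ≤ t + 1 by omega)]
        norm_num
      have hT2 : Tm (t + 1) 0 (Up - 1) Mp
          = (∏ i ∈ range (t + 1), ((i : ℚ[X]) + X)) *
            ((Up + X + ((0 : ℕ) : ℚ[X])) * ∏ j ∈ Icc 1 t, (Up + X + (j : ℚ[X]))) := by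
        rw [Tm, Nat.choose_zero_right, Nat.cast_one, one_mul, Finset.prod_range_zero, one_mul,
          Finset.prod_mul_distrib, Qx_eq, Qu_shift (t + 1) 0 Up (by omega)]
        rw [show t + 1 - 1 = t from rfl, Icc_prod_bot (show 0 ≤ t by omega)]
        norm_num
      have hc1 : cc (t + 1) 0 Up Mp = 0 := by simp [cc]
      have hc2 : cc (t + 1) 1 Up Mp
          = ((t + 1 : ℕ) : ℚ[X]) * (((0 : ℕ) : ℚ[X]) + X) *
            ((∏ i ∈ range (t + 1), ((i : ℚ[X]) + X)) *
              ((∏ j ∈ Icc 1 t, (Up + X + (j : ℚ[X]))) * (Up + X + ((t + 1 : ℕ) : ℚ[X])))) := by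
        rw [cc, Nat.choose_one_right, Nat.cast_one, one_mul, Finset.prod_range_zero, mul_one,
          Finset.prod_range_one, show t + 1 + 1 - 1 = t + 1 from rfl,
          Finset.prod_Icc_succ_top (show 1 ≤ t + 1 by omega)]
        ring
      rw [hT1, hT2, hT3, hc1, hc2]
      push_cast
      ring
    · -- 0 < k < n
      obtain ⟨s, rfl⟩ : ∃ s, k = s + 1 := ⟨k - 1, by omega⟩
      have hst : s ≤ t := by omega
      have hT1 : Tm (t + 1) (s + 1) Up Mp
          = ((t + 1).choose (s + 1) : ℚ[X]) *
            (((∏ i ∈ range s, (Mp + (i : ℚ[X]) + 1 - X)) * (Mp + (s : ℚ[X]) + 1 - X)) *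
              (∏ i ∈ range (s + 1), ((i : ℚ[X]) + X))) *
            ((∏ i ∈ range (t - s), ((i : ℚ[X]) + X)) *
              ((∏ j ∈ Icc (s + 1 + 1) t, (Up + X + (j : ℚ[X]))) *
                (Up + X + ((t + 1 : ℕ) : ℚ[X])))) := by
        rw [Tm, Finset.prod_mul_distrib, Finset.prod_mul_distrib, Qx_eq,
          show t + 1 - (s + 1) = t - s from by omega,
          Finset.prod_Icc_succ_top (show s + 1 + 1 ≤ t + 1 by omega),
          Finset.prod_range_succ]
      have hT2 : Tm (t + 1) (s + 1) (Up - 1) Mp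
          = ((t + 1).choose (s + 1) : ℚ[X]) *
            (((∏ i ∈ range s, (Mp + (i : ℚ[X]) + 1 - X)) * (Mp + (s : ℚ[X]) + 1 - X)) *
              (∏ i ∈ range (s + 1), ((i : ℚ[X]) + X))) *
            ((∏ i ∈ range (t - s), ((i : ℚ[X]) + X)) *
              ((Up + X + ((s + 1 : ℕ) : ℚ[X])) *
                ∏ j ∈ Icc (s + 1 + 1) t, (Up + X + (j : ℚ[X])))) := by
        rw [Tm, Finset.prod_mul_distrib, Finset.prod_mul_distrib, Qx_eq,
          show t + 1 - (s + 1) = t - s from by omega,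
          Qu_shift (t + 1) (s + 1) Up (by omega),
          show t + 1 - 1 = t from rfl,
          Icc_prod_bot (show s + 1 ≤ t by omega),
          Finset.prod_range_succ]
      have hT3 : Tm (t + 1) (s + 1) Up (Mp - 1)
          = ((t + 1).choose (s + 1) : ℚ[X]) *
            (((∏ i ∈ range s, (Mp + (i : ℚ[X]) + 1 - X)) * (Mp - X)) *
              (∏ i ∈ range (s + 1), ((i : ℚ[X]) + X))) *
            ((∏ i ∈ range (t - s), ((i : ℚ[X]) + X)) *
              ((∏ j ∈ Icc (s + 1 + 1) t, (Up + X + (j : ℚ[X]))) *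
                (Up + X + ((t + 1 : ℕ) : ℚ[X])))) := by
        rw [Tm, Finset.prod_mul_distrib, Finset.prod_mul_distrib, Qx_eq,
          show t + 1 - (s + 1) = t - s from by omega,
          Finset.prod_Icc_succ_top (show s + 1 + 1 ≤ t + 1 by omega)]
        have em : ∏ i ∈ range (s + 1), (Mp - 1 + (i : ℚ[X]) + 1 - X)
            = (∏ i ∈ range s, (Mp + (i : ℚ[X]) + 1 - X)) * (Mp - X) := by
          rw [Finset.prod_range_succ']
          congr 1
          · exact Finset.prod_congr rfl fun i _ => by push_cast; ring
          · push_cast; ring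
        rw [em]
      have hc1 : cc (t + 1) (s + 1) Up Mp
          = ((s + 1 : ℕ) : ℚ[X]) * ((t + 1).choose (s + 1) : ℚ[X]) *
            (∏ i ∈ range s, (Mp + (i : ℚ[X]) + 1 - X)) *
            (∏ i ∈ range (s + 1), ((i : ℚ[X]) + X)) *
            ((∏ i ∈ range (t - s), ((i : ℚ[X]) + X)) * (((t - s : ℕ) : ℚ[X]) + X)) *
            ((Up + X + ((s + 1 : ℕ) : ℚ[X])) *
              ((∏ j ∈ Icc (s + 1 + 1) t, (Up + X + (j : ℚ[X]))) *
                (Up + X + ((t + 1 : ℕ) : ℚ[X])))) := by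
        rw [cc, show s + 1 - 1 = s from rfl,
          show t + 1 + 1 - (s + 1) = (t - s) + 1 from by omega,
          Finset.prod_range_succ, Finset.prod_range_succ,
          Icc_prod_bot (show s + 1 ≤ t + 1 by omega),
          Finset.prod_Icc_succ_top (show s + 1 + 1 ≤ t + 1 by omega)]
      have hc2 : cc (t + 1) (s + 1 + 1) Up Mp
          = ((s + 1 + 1 : ℕ) : ℚ[X]) * ((t + 1).choose (s + 1 + 1) : ℚ[X]) *
            ((∏ i ∈ range s, (Mp + (i : ℚ[X]) + 1 - X)) * (Mp + (s : ℚ[X]) + 1 - X)) *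
            ((∏ i ∈ range (s + 1), ((i : ℚ[X]) + X)) * (((s + 1 : ℕ) : ℚ[X]) + X)) *
            (∏ i ∈ range (t - s), ((i : ℚ[X]) + X)) *
            ((∏ j ∈ Icc (s + 1 + 1) t, (Up + X + (j : ℚ[X]))) *
              (Up + X + ((t + 1 : ℕ) : ℚ[X]))) := by
        rw [cc, show s + 1 + 1 - 1 = s + 1 from rfl,
          show t + 1 + 1 - (s + 1 + 1) = t - s from by omega,
          Finset.prod_range_succ, Finset.prod_range_succ,
          Finset.prod_Icc_succ_top (show s + 1 + 1 ≤ t + 1 by omega)]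
      have hcc : (((t + 1).choose (s + 1 + 1) : ℚ[X])) * ((s : ℚ[X]) + 1 + 1)
          = (((t + 1).choose (s + 1) : ℚ[X])) * ((t : ℚ[X]) - (s : ℚ[X])) := by
        have h := Nat.choose_succ_right_eq (t + 1) (s + 1)
        have h2 := congrArg (Nat.cast : ℕ → ℚ[X]) h
        push_cast [Nat.cast_sub (show s + 1 ≤ t + 1 by omega), Nat.cast_sub hst] at h2
        linear_combination h2
      rw [hT1, hT2, hT3, hc1, hc2]
      push_cast [Nat.cast_sub hst]
      linear_combination ((∏ i ∈ range s, (Mp + (i : ℚ[X]) + 1 - X)) * (Mp + (s : ℚ[X]) + 1 - X) *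
        ((∏ i ∈ range (s + 1), ((i : ℚ[X]) + X)) * ((s : ℚ[X]) + 1 + X)) *
        (∏ i ∈ range (t - s), ((i : ℚ[X]) + X)) *
        ((∏ j ∈ Icc (s + 1 + 1) t, (Up + X + (j : ℚ[X]))) *
          (Up + X + ((t : ℚ[X]) + 1)))) * hcc
  · -- k = n
    obtain rfl : k = n := le_antisymm hk hge
    rcases Nat.eq_zero_or_pos k with rfl | hnpos
    · simp only [Tm, cc, Nat.choose_self, Nat.choose_succ_self, Nat.cast_one, Nat.cast_zero,
        Finset.prod_range_zero, Finset.Icc_eq_empty (by omega : ¬(0 + 1 : ℕ) ≤ 0),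
        Finset.prod_empty]
      ring
    · obtain ⟨t, rfl⟩ : ∃ t, k = t + 1 := ⟨k - 1, by omega⟩
      have hemp : Finset.Icc (t + 1 + 1) (t + 1) = (∅ : Finset ℕ) :=
        Finset.Icc_eq_empty (by omega)
      have hT1 : Tm (t + 1) (t + 1) Up Mp
          = ((∏ i ∈ range t, (Mp + (i : ℚ[X]) + 1 - X)) * (Mp + (t : ℚ[X]) + 1 - X)) *
            (∏ i ∈ range (t + 1), ((i : ℚ[X]) + X)) := by
        rw [Tm, Nat.choose_self, Nat.cast_one, one_mul, hemp, Finset.prod_empty, mul_one,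
          Finset.prod_mul_distrib, Finset.prod_range_succ]
      have hT2 : Tm (t + 1) (t + 1) (Up - 1) Mp
          = ((∏ i ∈ range t, (Mp + (i : ℚ[X]) + 1 - X)) * (Mp + (t : ℚ[X]) + 1 - X)) *
            (∏ i ∈ range (t + 1), ((i : ℚ[X]) + X)) := by
        rw [Tm, Nat.choose_self, Nat.cast_one, one_mul, hemp, Finset.prod_empty, mul_one,
          Finset.prod_mul_distrib, Finset.prod_range_succ]
      have hT3 : Tm (t + 1) (t + 1) Up (Mp - 1)
          = ((∏ i ∈ range t, (Mp + (i : ℚ[X]) + 1 - X)) * (Mp - X)) *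
            (∏ i ∈ range (t + 1), ((i : ℚ[X]) + X)) := by
        rw [Tm, Nat.choose_self, Nat.cast_one, one_mul, hemp, Finset.prod_empty, mul_one,
          Finset.prod_mul_distrib]
        have em : ∏ i ∈ range (t + 1), (Mp - 1 + (i : ℚ[X]) + 1 - X)
            = (∏ i ∈ range t, (Mp + (i : ℚ[X]) + 1 - X)) * (Mp - X) := by
          rw [Finset.prod_range_succ']
          congr 1
          · exact Finset.prod_congr rfl fun i _ => by push_cast; ring
          · push_cast; ring
        rw [em]
      have hc1 : cc (t + 1) (t + 1) Up Mp
          = ((t + 1 : ℕ) : ℚ[X]) *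
            (∏ i ∈ range t, (Mp + (i : ℚ[X]) + 1 - X)) *
            (∏ i ∈ range (t + 1), ((i : ℚ[X]) + X)) *
            ((((0 : ℕ) : ℚ[X]) + X) * (Up + X + ((t + 1 : ℕ) : ℚ[X]))) := by
        rw [cc, Nat.choose_self, Nat.cast_one, mul_one,
          show t + 1 - 1 = t from rfl, show t + 1 + 1 - (t + 1) = 1 from by omega,
          Finset.prod_range_one, Finset.Icc_self, Finset.prod_singleton]
        ring
      have hc2 : cc (t + 1) (t + 1 + 1) Up Mp = 0 := by
        simp [cc, Nat.choose_succ_self]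
      rw [hT1, hT2, hT3, hc1, hc2]
      push_cast
      ring

lemma key (n : ℕ) (Up Mp : ℚ[X]) :
    (Up + (Mp + (n : ℚ[X]))) * (Up - Mp + X) * (∑ k ∈ range (n + 1), Tm n k Up Mp)
      = (Up - Mp) * (Up + (n : ℚ[X]) + X) * (∑ k ∈ range (n + 1), Tm n k (Up - 1) Mp)
        + (Mp + (n : ℚ[X])) * (Up - Mp + 2 * X) * (∑ k ∈ range (n + 1), Tm n k Up (Mp - 1)) := by
  rw [← sub_eq_zero]
  have h1 : (Up + (Mp + (n : ℚ[X]))) * (Up - Mp + X) * (∑ k ∈ range (n + 1), Tm n k Up Mp)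
      - ((Up - Mp) * (Up + (n : ℚ[X]) + X) * (∑ k ∈ range (n + 1), Tm n k (Up - 1) Mp)
        + (Mp + (n : ℚ[X])) * (Up - Mp + 2 * X) * (∑ k ∈ range (n + 1), Tm n k Up (Mp - 1)))
      = ∑ k ∈ range (n + 1), (cc n k Up Mp - cc n (k + 1) Up Mp) := by
    rw [Finset.mul_sum, Finset.mul_sum, Finset.mul_sum, ← Finset.sum_add_distrib,
      ← Finset.sum_sub_distrib]
    refine Finset.sum_congr rfl fun k hk => ?_
    have hkn : k ≤ n := by rw [Finset.mem_range] at hk; omega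
    have := perk_s19 n k hkn Up Mp
    linear_combination this
  rw [h1, Finset.sum_range_sub' (fun k => cc n k Up Mp) (n + 1)]
  have h0 : cc n 0 Up Mp = 0 := by simp [cc]
  have hn1 : cc n (n + 1) Up Mp = 0 := by simp [cc, Nat.choose_succ_self]
  rw [h0, hn1, sub_zero]

theorem stmt19 (u d m : ℕ) (hm : 1 ≤ m) (hmu : m ≤ u) (hmd : m ≤ d) :
    ((u : ℚ[X]) + (d : ℚ[X])) * ((u : ℚ[X]) - (m : ℚ[X]) + X) * P u d m =
      ((u : ℚ[X]) - (m : ℚ[X])) * ((u : ℚ[X]) + (d : ℚ[X]) - (m : ℚ[X]) + X) * P (u - 1) d m +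
        (d : ℚ[X]) * ((u : ℚ[X]) - (m : ℚ[X]) + 2 * X) * P u (d - 1) (m - 1) := by
  have hu1 : ((u - 1 : ℕ) : ℚ[X]) = (u : ℚ[X]) - 1 := by
    push_cast [Nat.cast_sub (show 1 ≤ u by omega)]; ring
  have hm1 : ((m - 1 : ℕ) : ℚ[X]) = (m : ℚ[X]) - 1 := by
    push_cast [Nat.cast_sub (show 1 ≤ m by omega)]; ring
  have hP1 : P u d m = ∑ k ∈ range ((d - m) + 1), Tm (d - m) k (u : ℚ[X]) (m : ℚ[X]) := rfl
  have hP2 : P (u - 1) d m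
      = ∑ k ∈ range ((d - m) + 1), Tm (d - m) k ((u : ℚ[X]) - 1) (m : ℚ[X]) := by
    show (∑ k ∈ range ((d - m) + 1), Tm (d - m) k ((u - 1 : ℕ) : ℚ[X]) (m : ℚ[X])) = _
    rw [hu1]
  have hP3 : P u (d - 1) (m - 1)
      = ∑ k ∈ range ((d - m) + 1), Tm (d - m) k (u : ℚ[X]) ((m : ℚ[X]) - 1) := by
    have e : (d - 1) - (m - 1) = d - m := by omega
    show (∑ k ∈ range (((d - 1) - (m - 1)) + 1),
        Tm ((d - 1) - (m - 1)) k (u : ℚ[X]) ((m - 1 : ℕ) : ℚ[X])) = _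
    rw [e, hm1]
  have hd : (d : ℚ[X]) = (m : ℚ[X]) + ((d - m : ℕ) : ℚ[X]) := by
    push_cast [Nat.cast_sub hmd]; ring
  have hkey := key (d - m) (u : ℚ[X]) (m : ℚ[X])
  rw [← hP1, ← hP2, ← hP3] at hkey
  rw [hd]
  linear_combination hkey
end
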